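/- (Lemma 3.2) For every β ∈ ℝ, the penalty problem min_{z ∈ Ω} f_β(z) admits an extreme-point optimal solution: there exists z* = (x_1*,…,x_n*) ∈ Ω such that x_i* is an extreme point of Ω_i^+ for every i and f_β(z*) ≤ f_β(z) for all z ∈ Ω. -/

import Mathlib

noncomputable section

/-- Dot product on `ℝ^m`. -/
def dotp {m : ℕ} (x y : Fin m → ℝ) : ℝ := ∑ k, x k * y k

/-- The ℓ₁ penalty term `p(z) = Σ_{i<j} ⟨x_i, x_j⟩`. -/
def pen {n m : ℕ} (z : Fin n → Fin m → ℝ) : ℝ :=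
  ∑ i : Fin n, ∑ j : Fin n, if i < j then dotp (z i) (z j) else 0

/-- `f` is multi-affine: affine in each block when the others are fixed. -/
def MultiAffine {n m : ℕ} (f : (Fin n → Fin m → ℝ) → ℝ) : Prop :=
  ∀ (i : Fin n) (z : Fin n → Fin m → ℝ) (x y : Fin m → ℝ) (t : ℝ),
    f (Function.update z i (t • x + (1 - t) • y)) =
      t * f (Function.update z i x) + (1 - t) * f (Function.update z i y)

/-- Membership in `Ω = Ω₁⁺ × ⋯ × Ωₙ⁺`. -/
def InOmega {n m : ℕ} (Om : Fin n → Set (Fin m → ℝ)) (z : Fin n → Fin m → ℝ) : Prop :=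
  ∀ i, z i ∈ Om i

/-- Feasibility for (P): `z ∈ Ω` and `⟨x_i, x_j⟩ = 0` for all `i ≠ j`. -/
def Feas {n m : ℕ} (Om : Fin n → Set (Fin m → ℝ)) (z : Fin n → Fin m → ℝ) : Prop :=
  InOmega Om z ∧ ∀ i j, i ≠ j → dotp (z i) (z j) = 0

/-- `S^opt`: global minimizers of `f` over the feasible region of (P). -/
def SOpt {n m : ℕ} (Om : Fin n → Set (Fin m → ℝ)) (f : (Fin n → Fin m → ℝ) → ℝ) :
    Set (Fin n → Fin m → ℝ) :=
  {z | Feas Om z ∧ ∀ w, Feas Om w → f z ≤ f w}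

/-- `S_β^opt`: global minimizers of `f_β = f + β p` over `Ω`. -/
def SBeta {n m : ℕ} (Om : Fin n → Set (Fin m → ℝ)) (f : (Fin n → Fin m → ℝ) → ℝ) (β : ℝ) :
    Set (Fin n → Fin m → ℝ) :=
  {z | InOmega Om z ∧ ∀ w, InOmega Om w → f z + β * pen z ≤ f w + β * pen w}

/-- affine continuous function on compact convex nonempty set attains min at extreme pt -/
lemma affine_min_extreme {m : ℕ} (s : Set (Fin m → ℝ)) (hs : IsCompact s)
    (hcvx : Convex ℝ s) (hne : s.Nonempty) (h : (Fin m → ℝ) → ℝ) (hc : Continuous h)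
    (haff : ∀ (x y : Fin m → ℝ) (t : ℝ), h (t • x + (1 - t) • y) = t * h x + (1 - t) * h y) :
    ∃ x ∈ Set.extremePoints ℝ s, ∀ y ∈ s, h x ≤ h y := by
  obtain ⟨x0, hx0s, hx0⟩ := hs.exists_isMinOn hne hc.continuousOn
  set M : Set (Fin m → ℝ) := s ∩ h ⁻¹' {h x0} with hM
  have hMne : M.Nonempty := ⟨x0, hx0s, rfl⟩
  have hMcpt : IsCompact M := hs.inter_right (isClosed_singleton.preimage hc)
  have hext : IsExtreme ℝ s M := by
    constructor
    · exact Set.inter_subset_left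
    · rintro x1 hx1 x2 hx2 x ⟨hxs, hxv⟩ hseg
      obtain ⟨a, b, ha, hb, hab, rfl⟩ := hseg
      have hb' : b = 1 - a := by linarith
      subst hb'
      have hv : a * h x1 + (1 - a) * h x2 = h x0 := by
        rw [← haff]; exact hxv
      have h1 : h x0 ≤ h x1 := hx0 hx1
      have h2 : h x0 ≤ h x2 := hx0 hx2
      have e1 : h x1 = h x0 := by nlinarith
      have e2 : h x2 = h x0 := by nlinarith
      exact ⟨hx1, e1⟩
  obtain ⟨x, hx⟩ := hMcpt.extremePoints_nonempty hMne
  refine ⟨x, hext.extremePoints_subset_extremePoints hx, fun y hy => ?_⟩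
  have : h x = h x0 := (hx.1 : x ∈ M).2
  rw [this]; exact hx0 hy

lemma dotp_left_affine {m : ℕ} (x y w : Fin m → ℝ) (t : ℝ) :
    dotp (t • x + (1 - t) • y) w = t * dotp x w + (1 - t) * dotp y w := by
  simp only [dotp, Finset.mul_sum, ← Finset.sum_add_distrib]
  refine Finset.sum_congr rfl fun k _ => ?_
  simp [Pi.add_apply, Pi.smul_apply, smul_eq_mul]; ring

lemma dotp_right_affine {m : ℕ} (w x y : Fin m → ℝ) (t : ℝ) :
    dotp w (t • x + (1 - t) • y) = t * dotp w x + (1 - t) * dotp w y := by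
  simp only [dotp, Finset.mul_sum, ← Finset.sum_add_distrib]
  refine Finset.sum_congr rfl fun k _ => ?_
  simp [Pi.add_apply, Pi.smul_apply, smul_eq_mul]; ring

lemma pen_multiAffine {n m : ℕ} (i : Fin n) (z : Fin n → Fin m → ℝ)
    (x y : Fin m → ℝ) (t : ℝ) :
    pen (Function.update z i (t • x + (1 - t) • y)) =
      t * pen (Function.update z i x) + (1 - t) * pen (Function.update z i y) := by
  simp only [pen, Finset.mul_sum, ← Finset.sum_add_distrib]
  refine Finset.sum_congr rfl fun a _ => Finset.sum_congr rfl fun b _ => ?_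
  by_cases hab : a < b
  · simp only [hab, if_true]
    rcases eq_or_ne a i with rfl | ha
    · have hb : b ≠ a := (ne_of_gt hab)
      rw [Function.update_self, Function.update_self, Function.update_self,
        Function.update_of_ne hb, Function.update_of_ne hb, Function.update_of_ne hb]
      exact dotp_left_affine _ _ _ _
    · rcases eq_or_ne b i with rfl | hb
      · rw [Function.update_self, Function.update_self, Function.update_self,
          Function.update_of_ne ha, Function.update_of_ne ha, Function.update_of_ne ha]
        exact dotp_right_affine _ _ _ _
      · rw [Function.update_of_ne ha, Function.update_of_ne ha, Function.update_of_ne ha,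
          Function.update_of_ne hb, Function.update_of_ne hb, Function.update_of_ne hb]
        ring
  · simp [hab]

lemma dotp_continuous {m : ℕ} : Continuous fun p : (Fin m → ℝ) × (Fin m → ℝ) => dotp p.1 p.2 := by
  unfold dotp
  exact continuous_finset_sum _ fun k _ =>
    ((continuous_apply k).comp continuous_fst).mul ((continuous_apply k).comp continuous_snd)

lemma pen_continuous {n m : ℕ} : Continuous (pen (n := n) (m := m)) := by
  unfold pen dotp
  refine continuous_finset_sum _ fun i _ => continuous_finset_sum _ fun j _ => ?_
  by_cases h : i < j
  · simp only [h, if_true]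
    refine continuous_finset_sum _ fun k _ => Continuous.mul ?_ ?_
    · exact (continuous_apply k).comp (continuous_apply i)
    · exact (continuous_apply k).comp (continuous_apply j)
  · simpa [h] using continuous_const

lemma update_continuous {n m : ℕ} (z : Fin n → Fin m → ℝ) (i : Fin n) :
    Continuous fun x : Fin m → ℝ => Function.update z i x := by
  refine continuous_pi fun j => ?_
  by_cases hj : j = i
  · subst hj; simpa using continuous_id'
  · simp only [Function.update_of_ne hj]; exact continuous_const

/-- **Lemma 3.2.** For every `β ∈ ℝ`, the penalty problem admits an extreme-point
optimal solution. -/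
theorem extreme_point_optimal_solution (n m : ℕ) (hn : 2 ≤ n) (hm : 1 ≤ m)
    (Om : Fin n → Set (Fin m → ℝ))
    (hne : ∀ i, (Om i).Nonempty) (hcpt : ∀ i, IsCompact (Om i))
    (hcvx : ∀ i, Convex ℝ (Om i))
    (hnonneg : ∀ i, ∀ x ∈ Om i, ∀ k, 0 ≤ x k)
    (f : (Fin n → Fin m → ℝ) → ℝ) (hf : MultiAffine f) (hfc : Continuous f)
    (β : ℝ) :
    ∃ z : Fin n → Fin m → ℝ,
      (∀ i, z i ∈ Set.extremePoints ℝ (Om i)) ∧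
      ∀ w, InOmega Om w → f z + β * pen z ≤ f w + β * pen w := by
  set g : (Fin n → Fin m → ℝ) → ℝ := fun z => f z + β * pen z with hg
  have hgc : Continuous g := hfc.add (continuous_const.mul pen_continuous)
  have hgaff : ∀ (i : Fin n) (z : Fin n → Fin m → ℝ) (x y : Fin m → ℝ) (t : ℝ),
      g (Function.update z i (t • x + (1 - t) • y)) =
        t * g (Function.update z i x) + (1 - t) * g (Function.update z i y) := by
    intro i z x y t
    simp only [hg, hf i z x y t, pen_multiAffine i z x y t]
    ring
  have main : ∀ k : ℕ, k ≤ n → ∃ z, InOmega Om z ∧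
      (∀ i : Fin n, (i : ℕ) < k → z i ∈ Set.extremePoints ℝ (Om i)) ∧
      ∀ w, InOmega Om w → g z ≤ g w := by
    intro k
    induction k with
    | zero =>
      intro _
      have hΩc : IsCompact (Set.univ.pi Om) := isCompact_univ_pi hcpt
      have hΩne : (Set.univ.pi Om).Nonempty := by
        refine ⟨fun i => (hne i).choose, fun i _ => (hne i).choose_spec⟩
      obtain ⟨z, hzΩ, hzmin⟩ := hΩc.exists_isMinOn hΩne hgc.continuousOn
      exact ⟨z, fun i => hzΩ i (Set.mem_univ i), fun i hi => absurd hi (Nat.not_lt_zero _),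
        fun w hw => hzmin (Set.mem_univ_pi.2 hw)⟩
    | succ k ih =>
      intro hk
      obtain ⟨z, hzΩ, hzext, hzmin⟩ := ih (Nat.le_of_succ_le hk)
      set i : Fin n := ⟨k, hk⟩ with hi
      obtain ⟨x, hxext, hxmin⟩ := affine_min_extreme (Om i) (hcpt i) (hcvx i) (hne i)
        (fun x => g (Function.update z i x))
        (hgc.comp (update_continuous z i)) (fun x y t => hgaff i z x y t)
      refine ⟨Function.update z i x, ?_, ?_, ?_⟩
      · intro j
        by_cases hj : j = i
        · subst hj; simpa using hxext.1
        · rw [Function.update_of_ne hj]; exact hzΩ j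
      · intro j hj
        by_cases hji : j = i
        · subst hji; simpa using hxext
        · have : (j : ℕ) < k := by
            have : (j : ℕ) ≠ k := fun h => hji (Fin.ext h)
            omega
          rw [Function.update_of_ne hji]
          exact hzext j this
      · intro w hw
        have h1 : g (Function.update z i x) ≤ g (Function.update z i (z i)) :=
          hxmin (z i) (hzΩ i)
        rw [Function.update_eq_self] at h1
        exact h1.trans (hzmin w hw)
  obtain ⟨z, _, hzext, hzmin⟩ := main n le_rfl
  exact ⟨z, fun i => hzext i i.isLt, hzmin⟩
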